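/- Let m ≥ 1, let Ψ be a set of pairs of probability measures on ℝ^m, let ε > 0 and W > 0. Suppose that for every pair (μᵢ, μⱼ) ∈ Ψ there exists a coupling γ of μᵢ and μⱼ such that ‖x − y‖₁ ≤ W for γ-almost every (x, y) ∈ ℝ^m × ℝ^m (i.e., the ∞-Wasserstein distance between μᵢ and μⱼ is at most W). Then the additive-noise mechanism with noise Lapₘ(W/ε) satisfies (ε, 0)-distribution privacy with respect to Ψ: for every pair (μᵢ, μⱼ) ∈ Ψ and every measurable set S ⊆ ℝ^m, (μᵢ ∗ Lapₘ(W/ε))(S) ≤ e^ε · (μⱼ ∗ Lapₘ(W/ε))(S). -/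

import Mathlib

open MeasureTheory ProbabilityTheory

/-- The Laplace measure on `ℝ^m` with scale `b`: `m` i.i.d. Laplace(`b`) coordinates. -/
noncomputable def lapPi (m : ℕ) (b : ℝ) : Measure (Fin m → ℝ) :=
  MeasureTheory.volume.withDensity
    (fun x => ENNReal.ofReal (∏ k, (1 / (2 * b)) * Real.exp (-|x k| / b)))

/-- Convolution of two measures on `ℝ^m`: the law of `X + Z` with `X ∼ μ`, `Z ∼ ν` independent. -/
noncomputable def mconv {m : ℕ} (μ ν : Measure (Fin m → ℝ)) : Measure (Fin m → ℝ) :=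
  (μ.prod ν).map (fun p => p.1 + p.2)

/-- The `L¹` norm on `ℝ^m`. -/
def l1norm {m : ℕ} (x : Fin m → ℝ) : ℝ := ∑ k, |x k|

/-- `γ` is a coupling of `μ` and `ν`. -/
def IsCoupling {m : ℕ} (γ : Measure ((Fin m → ℝ) × (Fin m → ℝ)))
    (μ ν : Measure (Fin m → ℝ)) : Prop :=
  γ.map Prod.fst = μ ∧ γ.map Prod.snd = ν

/-- The Laplace density on `ℝ^m`. -/
noncomputable def lapDen (m : ℕ) (b : ℝ) (x : Fin m → ℝ) : ℝ :=
  ∏ k, (1 / (2 * b)) * Real.exp (-|x k| / b)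

lemma measurable_lapDen (m : ℕ) (b : ℝ) : Measurable (lapDen m b) := by
  unfold lapDen; fun_prop

lemma lapDen_nonneg {m : ℕ} {b : ℝ} (hb : 0 < b) (x : Fin m → ℝ) : 0 ≤ lapDen m b x := by
  unfold lapDen; positivity

/-- Pointwise density ratio bound. -/
lemma lapDen_ratio {m : ℕ} {b W ε : ℝ} (hb : 0 < b) (hWb : W / b ≤ ε)
    (x y t : Fin m → ℝ) (h : l1norm (x - y) ≤ W) :
    lapDen m b (t - x) ≤ Real.exp ε * lapDen m b (t - y) := by
  have hεW : Real.exp (l1norm (x - y) / b) ≤ Real.exp ε := by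
    apply Real.exp_le_exp.mpr
    calc l1norm (x - y) / b ≤ W / b := by gcongr
      _ ≤ ε := hWb
  calc lapDen m b (t - x)
      ≤ ∏ k, ((1 / (2 * b)) * Real.exp (-|(t - y) k| / b) * Real.exp (|(x - y) k| / b)) := by
        unfold lapDen
        apply Finset.prod_le_prod
        · intro k _; positivity
        · intro k _
          rw [mul_assoc, ← Real.exp_add]
          apply mul_le_mul_of_nonneg_left _ (by positivity)
          apply Real.exp_le_exp.mpr
          rw [← add_div]
          have h3 := abs_sub_le (t k) (x k) (y k)
          simp only [Pi.sub_apply]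
          gcongr
          linarith
    _ = lapDen m b (t - y) * ∏ k, Real.exp (|(x - y) k| / b) := by
        rw [Finset.prod_mul_distrib]; rfl
    _ ≤ lapDen m b (t - y) * Real.exp ε := by
        apply mul_le_mul_of_nonneg_left _ (lapDen_nonneg hb _)
        rw [← Real.exp_sum]
        refine le_trans (le_of_eq ?_) hεW
        rw [l1norm, Finset.sum_div]
    _ = Real.exp ε * lapDen m b (t - y) := mul_comm _ _

/-- Convolution as an integral of translated densities. -/
lemma mconv_lapPi_apply {m : ℕ} (μ : Measure (Fin m → ℝ)) [SFinite μ] {b : ℝ}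
    (S : Set (Fin m → ℝ)) (hS : MeasurableSet S) :
    mconv μ (lapPi m b) S
      = ∫⁻ x, ∫⁻ t in S, ENNReal.ofReal (lapDen m b (t - x)) ∂volume ∂μ := by
  have hadd : Measurable (fun p : (Fin m → ℝ) × (Fin m → ℝ) => p.1 + p.2) := by fun_prop
  have hden : Measurable (fun z : Fin m → ℝ => ENNReal.ofReal (lapDen m b z)) :=
    (measurable_lapDen m b).ennreal_ofReal
  have hsf : SFinite (lapPi m b) :=
    by unfold lapPi; infer_instance
  rw [mconv, Measure.map_apply hadd hS, Measure.prod_apply (hadd hS)]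
  refine lintegral_congr fun x => ?_
  have hpre : MeasurableSet ((fun z => x + z) ⁻¹' S) := (measurable_const_add x) hS
  have h1 : (Prod.mk x ⁻¹' ((fun p : (Fin m → ℝ) × (Fin m → ℝ) => p.1 + p.2) ⁻¹' S))
      = (fun z => x + z) ⁻¹' S := rfl
  rw [h1, lapPi, withDensity_apply _ hpre]
  have hmp : MeasurePreserving (fun z : Fin m → ℝ => x + z) volume volume :=
    measurePreserving_add_left volume x
  have hemb : MeasurableEmbedding (fun z : Fin m → ℝ => x + z) :=
    (MeasurableEquiv.addLeft x).measurableEmbedding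
  have := hmp.setLIntegral_comp_preimage_emb hemb
      (fun t => ENNReal.ofReal (lapDen m b (t - x))) S
  rw [← this]
  refine setLIntegral_congr_fun hpre (fun z _ => ?_)
  congr 1
  simp [lapDen]

theorem wasserstein_mechanism
    (m : ℕ) (hm : 1 ≤ m)
    (Ψ : Set (Measure (Fin m → ℝ) × Measure (Fin m → ℝ)))
    (ε W : ℝ) (hε : 0 < ε) (hW : 0 < W)
    (hprob : ∀ p ∈ Ψ, IsProbabilityMeasure p.1 ∧ IsProbabilityMeasure p.2)
    (hwass : ∀ p ∈ Ψ, ∃ γ : Measure ((Fin m → ℝ) × (Fin m → ℝ)),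
      IsCoupling γ p.1 p.2 ∧ ∀ᵐ xy ∂γ, l1norm (xy.1 - xy.2) ≤ W) :
    ∀ p ∈ Ψ, ∀ S : Set (Fin m → ℝ), MeasurableSet S →
      mconv p.1 (lapPi m (W / ε)) S
        ≤ ENNReal.ofReal (Real.exp ε) * mconv p.2 (lapPi m (W / ε)) S := by
  intro p hp S hS
  obtain ⟨h1, h2⟩ := hprob p hp
  obtain ⟨γ, ⟨hγ1, hγ2⟩, hae⟩ := hwass p hp
  set b : ℝ := W / ε with hbdef
  have hb : 0 < b := div_pos hW hε
  have hWb : W / b ≤ ε := le_of_eq (by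
    rw [hbdef, div_div_eq_mul_div, mul_comm, mul_div_assoc, div_self hW.ne', mul_one])
  set g : (Fin m → ℝ) → ENNReal :=
    fun x => ∫⁻ t in S, ENNReal.ofReal (lapDen m b (t - x)) ∂volume with hgdef
  have hFmeas : Measurable (fun q : (Fin m → ℝ) × (Fin m → ℝ) =>
      (Prod.snd ⁻¹' S : Set ((Fin m → ℝ) × (Fin m → ℝ))).indicator
        (fun q => ENNReal.ofReal (lapDen m b (q.2 - q.1))) q) := by
    apply Measurable.indicator
    · exact ((measurable_lapDen m b).comp (measurable_snd.sub measurable_fst)).ennreal_ofReal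
    · exact measurable_snd hS
  have hgmeas : Measurable g := by
    have : g = fun x => ∫⁻ t,
        (Prod.snd ⁻¹' S : Set ((Fin m → ℝ) × (Fin m → ℝ))).indicator
          (fun q => ENNReal.ofReal (lapDen m b (q.2 - q.1))) (x, t) ∂volume := by
      funext x
      show (∫⁻ t in S, ENNReal.ofReal (lapDen m b (t - x)) ∂volume) = _
      rw [← lintegral_indicator hS]
      refine lintegral_congr fun t => ?_
      by_cases ht : t ∈ S <;> simp [Set.indicator_apply, ht]
    rw [this]
    exact Measurable.lintegral_prod_right' hFmeas
  have hgbound : ∀ x y : Fin m → ℝ, l1norm (x - y) ≤ W →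
      g x ≤ ENNReal.ofReal (Real.exp ε) * g y := by
    intro x y hxy
    have hmy : Measurable fun t : Fin m → ℝ => ENNReal.ofReal (lapDen m b (t - y)) :=
      ((measurable_lapDen m b).comp (measurable_id.sub measurable_const)).ennreal_ofReal
    calc g x ≤ ∫⁻ t in S, ENNReal.ofReal (Real.exp ε) * ENNReal.ofReal (lapDen m b (t - y)) ∂volume := by
          refine setLIntegral_mono (measurable_const.mul hmy) fun t _ => ?_
          rw [← ENNReal.ofReal_mul (Real.exp_nonneg ε)]
          exact ENNReal.ofReal_le_ofReal (lapDen_ratio hb hWb x y t hxy)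
      _ = ENNReal.ofReal (Real.exp ε) * g y := lintegral_const_mul _ hmy
  calc mconv p.1 (lapPi m b) S = ∫⁻ x, g x ∂p.1 := mconv_lapPi_apply p.1 S hS
    _ = ∫⁻ q, g q.1 ∂γ := by rw [← hγ1, lintegral_map hgmeas measurable_fst]
    _ ≤ ∫⁻ q, ENNReal.ofReal (Real.exp ε) * g q.2 ∂γ := by
        refine lintegral_mono_ae (hae.mono fun q hq => ?_)
        exact hgbound q.1 q.2 hq
    _ = ENNReal.ofReal (Real.exp ε) * ∫⁻ q, g q.2 ∂γ :=
        lintegral_const_mul _ (hgmeas.comp measurable_snd)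
    _ = ENNReal.ofReal (Real.exp ε) * ∫⁻ y, g y ∂p.2 := by
        rw [← hγ2, lintegral_map hgmeas measurable_snd]
    _ = ENNReal.ofReal (Real.exp ε) * mconv p.2 (lapPi m b) S := by
        rw [mconv_lapPi_apply p.2 S hS]
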